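/- Let x_1,…,x_n ∈ [Δ]^d be a sequence of points with Euclidean distance, z ≥ 1 a constant, and for t ∈ [n] let σ_t = max over sets C of at most k centers of dist(x_t,C)^z / Σ_{i=1}^t dist(x_i,C)^z be the online sensitivity of x_t for (k,z)-clustering. Then Σ_{t=1}^n σ_t = O(2^{2z} · k · log²(n·d·Δ)). -/

import Mathlib

open scoped BigOperators

/-- Distance from a point to a finite set of centers. -/
noncomputable def distToSet {d : ℕ} (x : EuclideanSpace ℝ (Fin d))
    (C : Finset (EuclideanSpace ℝ (Fin d))) : ℝ :=
  sInf ((fun c => dist x c) '' (C : Set (EuclideanSpace ℝ (Fin d))))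

/-- Cost of a single point with respect to a center set: `dist(x,C)^z`. -/
noncomputable def cost1 {d : ℕ} (z : ℝ) (x : EuclideanSpace ℝ (Fin d))
    (C : Finset (EuclideanSpace ℝ (Fin d))) : ℝ :=
  distToSet x C ^ z

/-- Online sensitivity of the `t`-th point of the stream `x` for `(k,z)`-clustering:
`σ_t = sup_{|C| ≤ k} dist(x_t,C)^z / ∑_{i=1}^t dist(x_i,C)^z`. -/
noncomputable def onlineSens {d : ℕ} (k : ℕ) (z : ℝ)
    (x : ℕ → EuclideanSpace ℝ (Fin d)) (t : ℕ) : ℝ :=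
  sSup {r : ℝ | ∃ C : Finset (EuclideanSpace ℝ (Fin d)), C.Nonempty ∧ C.card ≤ k ∧
    r = cost1 z (x t) C / ∑ i ∈ Finset.Icc 1 t, cost1 z (x i) C}

namespace OSB

variable {d : ℕ}

local notation "Pt" => EuclideanSpace ℝ (Fin d)

attribute [local instance] Classical.propDecidable

lemma distToSet_nonneg (x : Pt) (C : Finset Pt) : 0 ≤ distToSet x C := by
  apply Real.sInf_nonneg
  rintro r ⟨c, _, rfl⟩
  exact dist_nonneg

lemma distToSet_le (x : Pt) {C : Finset Pt} {c : Pt} (hc : c ∈ C) :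
    distToSet x C ≤ dist x c := by
  apply csInf_le
  · exact (Set.Finite.image _ (C.finite_toSet)).bddBelow
  · exact ⟨c, hc, rfl⟩

lemma exists_distToSet {x : Pt} {C : Finset Pt} (hC : C.Nonempty) :
    ∃ c ∈ C, distToSet x C = dist x c := by
  have hne : ((fun c => dist x c) '' (C : Set Pt)).Nonempty := ⟨dist x hC.choose, hC.choose, hC.choose_spec, rfl⟩
  have hfin : ((fun c => dist x c) '' (C : Set Pt)).Finite := Set.Finite.image _ (C.finite_toSet)
  have := hne.csInf_mem hfin
  obtain ⟨c, hc, h⟩ := this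
  exact ⟨c, hc, h.symm⟩

lemma cost1_nonneg (z : ℝ) (x : Pt) (C : Finset Pt) : 0 ≤ cost1 z x C :=
  Real.rpow_nonneg (distToSet_nonneg x C) z

lemma rpow3 {z a b c : ℝ} (hz : 1 ≤ z) (ha : 0 ≤ a) (hb : 0 ≤ b) (hc : 0 ≤ c) :
    (a + b + c) ^ z ≤ 3 ^ (z - 1) * (a ^ z + b ^ z + c ^ z) := by
  have key := Real.rpow_arith_mean_le_arith_mean_rpow (Finset.univ : Finset (Fin 3))
      (fun _ => (1:ℝ)/3) ![a, b, c] (by intro i _; norm_num)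
      (by simp) ?_ hz
  · have h1 : (∑ i : Fin 3, (1:ℝ)/3 * (![a,b,c] i)) = (a+b+c)/3 := by
      simp [Fin.sum_univ_succ]; ring
    have h2 : (∑ i : Fin 3, (1:ℝ)/3 * (![a,b,c] i) ^ z) = (a^z+b^z+c^z)/3 := by
      simp [Fin.sum_univ_succ]; ring
    rw [h1, h2] at key
    have h3 : ((a+b+c)/3) ^ z = (a+b+c)^z * (3:ℝ)^(-z) := by
      rw [div_eq_mul_inv, Real.mul_rpow (by linarith) (by norm_num),
        Real.inv_rpow (by norm_num), ← Real.rpow_neg (by norm_num)]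
    rw [h3] at key
    have h4 : (0:ℝ) < (3:ℝ)^(-z) := Real.rpow_pos_of_pos (by norm_num) _
    calc (a+b+c)^z = ((a+b+c)^z * 3^(-z)) * 3^z := by
          rw [mul_assoc, ← Real.rpow_add (by norm_num), neg_add_cancel, Real.rpow_zero, mul_one]
      _ ≤ (a^z+b^z+c^z)/3 * 3^z := by
          apply mul_le_mul_of_nonneg_right key (Real.rpow_nonneg (by norm_num) _)
      _ = 3 ^ (z-1) * (a^z+b^z+c^z) := by
          rw [div_eq_mul_inv, Real.rpow_sub (by norm_num), Real.rpow_one]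
          ring
  · intro i _
    fin_cases i <;> simpa


noncomputable def costS (z : ℝ) (x : ℕ → Pt) (t : ℕ) (C : Finset Pt) : ℝ :=
  ∑ i ∈ Finset.Icc 1 t, cost1 z (x i) C

def OPTset (k : ℕ) (z : ℝ) (x : ℕ → Pt) (t : ℕ) : Set ℝ :=
  {r | ∃ C : Finset Pt, C.Nonempty ∧ C.card ≤ k ∧ r = costS z x t C}

noncomputable def OPT (k : ℕ) (z : ℝ) (x : ℕ → Pt) (t : ℕ) : ℝ := sInf (OPTset k z x t)

lemma costS_nonneg (z : ℝ) (x : ℕ → Pt) (t : ℕ) (C : Finset Pt) : 0 ≤ costS z x t C :=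
  Finset.sum_nonneg fun i _ => cost1_nonneg z (x i) C

lemma OPTset_nonempty {k : ℕ} (hk : 1 ≤ k) (z : ℝ) (x : ℕ → Pt) (t : ℕ) :
    (OPTset k z x t).Nonempty :=
  ⟨costS z x t {x 1}, {x 1}, Finset.singleton_nonempty _, by simpa using hk, rfl⟩

lemma OPTset_bddBelow (k : ℕ) (z : ℝ) (x : ℕ → Pt) (t : ℕ) : BddBelow (OPTset k z x t) :=
  ⟨0, by rintro r ⟨C, _, _, rfl⟩; exact costS_nonneg z x t C⟩

lemma OPT_nonneg {k : ℕ} (hk : 1 ≤ k) (z : ℝ) (x : ℕ → Pt) (t : ℕ) : 0 ≤ OPT k z x t :=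
  le_csInf (OPTset_nonempty hk z x t) (by rintro r ⟨C, _, _, rfl⟩; exact costS_nonneg z x t C)

lemma OPT_le_costS (k : ℕ) (z : ℝ) (x : ℕ → Pt) (t : ℕ) {C : Finset Pt}
    (hC : C.Nonempty) (hCk : C.card ≤ k) : OPT k z x t ≤ costS z x t C :=
  csInf_le (OPTset_bddBelow k z x t) ⟨C, hC, hCk, rfl⟩

lemma costS_mono (z : ℝ) (x : ℕ → Pt) {s t : ℕ} (h : s ≤ t) (C : Finset Pt) :
    costS z x s C ≤ costS z x t C :=
  Finset.sum_le_sum_of_subset_of_nonneg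
    (Finset.Icc_subset_Icc le_rfl h) (fun i _ _ => cost1_nonneg z (x i) C)

lemma OPT_mono {k : ℕ} (hk : 1 ≤ k) (z : ℝ) (x : ℕ → Pt) {s t : ℕ} (h : s ≤ t) :
    OPT k z x s ≤ OPT k z x t := by
  apply le_csInf (OPTset_nonempty hk z x t)
  rintro r ⟨C, hC, hCk, rfl⟩
  exact le_trans (OPT_le_costS k z x s hC hCk) (costS_mono z x h C)

lemma exists_costS_lt {k : ℕ} (hk : 1 ≤ k) (z : ℝ) (x : ℕ → Pt) (t : ℕ) {r : ℝ}
    (h : OPT k z x t < r) :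
    ∃ C : Finset Pt, C.Nonempty ∧ C.card ≤ k ∧ costS z x t C < r := by
  obtain ⟨s, hs, hsr⟩ := exists_lt_of_csInf_lt (OPTset_nonempty hk z x t) h
  obtain ⟨C, hC, hCk, rfl⟩ := hs
  exact ⟨C, hC, hCk, hsr⟩


lemma harmonic_mono : Monotone harmonic :=
  monotone_nat_of_le_succ fun n => by
    rw [harmonic_succ]; exact le_add_of_nonneg_right (by positivity)

lemma sum_inv_rank_le (S : Finset ℕ) :
    ∑ t ∈ S, (1:ℝ)/((S.filter (fun i => i ≤ t)).card) ≤ (harmonic S.card : ℝ) := by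
  induction S using Finset.strongInduction with
  | _ S ih =>
    rcases S.eq_empty_or_nonempty with rfl | hS
    · simp
    · set t0 := S.max' hS with ht0
      have ht0S : t0 ∈ S := S.max'_mem hS
      have hfull : S.filter (fun i => i ≤ t0) = S := by
        apply Finset.filter_true_of_mem
        intro i hi; exact S.le_max' i hi
      have herase : ∀ t ∈ S.erase t0,
          (S.erase t0).filter (fun i => i ≤ t) = S.filter (fun i => i ≤ t) := by
        intro t ht
        have htlt : t < t0 := lt_of_le_of_ne (S.le_max' t (Finset.mem_of_mem_erase ht))
          (Finset.ne_of_mem_erase ht)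
        ext i
        simp only [Finset.mem_filter, Finset.mem_erase]
        constructor
        · rintro ⟨⟨_, hiS⟩, hit⟩; exact ⟨hiS, hit⟩
        · rintro ⟨hiS, hit⟩; exact ⟨⟨by omega, hiS⟩, hit⟩
      have hsum : ∑ t ∈ S, (1:ℝ)/((S.filter (fun i => i ≤ t)).card)
          = (∑ t ∈ S.erase t0, (1:ℝ)/(((S.erase t0).filter (fun i => i ≤ t)).card))
            + 1/(S.card : ℝ) := by
        rw [← Finset.sum_erase_add S _ ht0S, hfull]
        congr 1
        apply Finset.sum_congr rfl
        intro t ht; rw [herase t ht]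
      rw [hsum]
      have hIH := ih (S.erase t0) (Finset.erase_ssubset ht0S)
      have hcard : (S.erase t0).card = S.card - 1 := Finset.card_erase_of_mem ht0S
      have hSpos : 1 ≤ S.card := Finset.card_pos.mpr hS
      have hharm : (harmonic (S.card - 1) : ℝ) + 1/(S.card : ℝ) = (harmonic S.card : ℝ) := by
        obtain ⟨c, hc⟩ : ∃ c, S.card = c + 1 := ⟨S.card - 1, by omega⟩
        rw [hc]
        simp only [Nat.add_sub_cancel]
        rw [harmonic_succ]
        push_cast
        rw [one_div]
      calc _ ≤ (harmonic (S.card - 1) : ℝ) + 1/(S.card : ℝ) := by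
              apply add_le_add_left; rw [← hcard]; exact hIH
        _ = _ := hharm

lemma sum_le_classes {γ : Type*} [DecidableEq γ] (S : Finset ℕ) (g : ℕ → γ) (F : ℕ → ℝ)
    {m : ℕ} (hm : 1 ≤ m) (hcard : S.card ≤ m)
    (hF : ∀ t ∈ S, F t ≤ 1/((S.filter (fun i => g i = g t ∧ i ≤ t)).card : ℝ)) :
    ∑ t ∈ S, F t ≤ (S.image g).card * (1 + Real.log m) := by
  have hlogm : (0:ℝ) ≤ 1 + Real.log m := by
    have : (0:ℝ) ≤ Real.log m := Real.log_nonneg (by exact_mod_cast hm)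
    linarith
  have hpart : ∑ t ∈ S, F t = ∑ v ∈ S.image g, ∑ t ∈ S.filter (fun i => g i = v), F t := by
    exact (Finset.sum_fiberwise_of_maps_to (fun i hi => Finset.mem_image_of_mem g hi) F).symm
  rw [hpart]
  have hclass : ∀ v ∈ S.image g, ∑ t ∈ S.filter (fun i => g i = v), F t ≤ 1 + Real.log m := by
    intro v hv
    set Sv := S.filter (fun i => g i = v) with hSv
    have h1 : ∑ t ∈ Sv, F t ≤ ∑ t ∈ Sv, (1:ℝ)/((Sv.filter (fun i => i ≤ t)).card) := by
      apply Finset.sum_le_sum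
      intro t ht
      have htS : t ∈ S := Finset.mem_of_mem_filter t ht
      have hgt : g t = v := (Finset.mem_filter.mp ht).2
      have : S.filter (fun i => g i = g t ∧ i ≤ t) = Sv.filter (fun i => i ≤ t) := by
        rw [hSv, Finset.filter_filter, hgt]
      calc F t ≤ 1/((S.filter (fun i => g i = g t ∧ i ≤ t)).card : ℝ) := hF t htS
        _ = _ := by rw [this]
    have h2 := sum_inv_rank_le Sv
    have h3 : (harmonic Sv.card : ℝ) ≤ (harmonic m : ℝ) := by
      exact_mod_cast harmonic_mono (le_trans (Finset.card_filter_le _ _) hcard)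
    have h4 : (harmonic m : ℝ) ≤ 1 + Real.log m := harmonic_le_one_add_log m
    linarith
  calc ∑ v ∈ S.image g, ∑ t ∈ S.filter (fun i => g i = v), F t
      ≤ ∑ v ∈ S.image g, (1 + Real.log m) := Finset.sum_le_sum hclass
    _ = (S.image g).card * (1 + Real.log m) := by rw [Finset.sum_const, nsmul_eq_mul]


lemma grid_sep {Δ : ℕ} {p q : Pt}
    (hp : ∀ a : Fin d, ∃ m : ℕ, 1 ≤ m ∧ m ≤ Δ ∧ p a = m)
    (hq : ∀ a : Fin d, ∃ m : ℕ, 1 ≤ m ∧ m ≤ Δ ∧ q a = m)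
    (hne : p ≠ q) : 1 ≤ dist p q := by
  have hex : ∃ a : Fin d, p a ≠ q a := by
    by_contra h
    push_neg at h
    exact hne (PiLp.ext h)
  obtain ⟨a, ha⟩ := hex
  obtain ⟨m, _, _, hm⟩ := hp a
  obtain ⟨m', _, _, hm'⟩ := hq a
  have hmm : m ≠ m' := by
    intro h; apply ha; rw [hm, hm', h]
  have h1 : (1:ℝ) ≤ dist (p a) (q a) := by
    rw [Real.dist_eq, hm, hm']
    have h2 : (1:ℤ) ≤ |(m:ℤ) - (m':ℤ)| := Int.one_le_abs (by omega)
    have h3 : (1:ℝ) ≤ |((m:ℤ) - (m':ℤ) : ℤ)| := by exact_mod_cast h2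
    push_cast at h3
    exact h3
  calc (1:ℝ) ≤ dist (p a) (q a) := h1
    _ ≤ dist p q := by
        rw [EuclideanSpace.dist_eq]
        have hle : dist (p a) (q a) ^ 2 ≤ ∑ i, dist (p i) (q i) ^ 2 := by
          apply Finset.single_le_sum (f := fun i => dist (p i) (q i) ^ 2)
          · intro i _; positivity
          · exact Finset.mem_univ a
        calc dist (p a) (q a) = Real.sqrt (dist (p a) (q a) ^ 2) :=
              (Real.sqrt_sq dist_nonneg).symm
          _ ≤ _ := Real.sqrt_le_sqrt hle

lemma grid_diam {Δ : ℕ} (hd : 1 ≤ d) {p q : Pt}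
    (hp : ∀ a : Fin d, ∃ m : ℕ, 1 ≤ m ∧ m ≤ Δ ∧ p a = m)
    (hq : ∀ a : Fin d, ∃ m : ℕ, 1 ≤ m ∧ m ≤ Δ ∧ q a = m) :
    dist p q ≤ (d:ℝ) * Δ := by
  have hdΔ : (0:ℝ) ≤ (d:ℝ) * Δ := by positivity
  rw [EuclideanSpace.dist_eq]
  have hbound : ∀ a : Fin d, dist (p a) (q a) ^ 2 ≤ (Δ:ℝ)^2 := by
    intro a
    obtain ⟨m, hm1, hm2, hm⟩ := hp a
    obtain ⟨m', hm'1, hm'2, hm'⟩ := hq a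
    have : dist (p a) (q a) ≤ (Δ:ℝ) := by
      rw [Real.dist_eq, hm, hm']
      rw [abs_sub_le_iff]
      constructor
      · have : (m:ℝ) ≤ Δ := by exact_mod_cast hm2
        have h0 : (1:ℝ) ≤ (m':ℝ) := by exact_mod_cast hm'1
        linarith
      · have : (m':ℝ) ≤ Δ := by exact_mod_cast hm'2
        have h0 : (1:ℝ) ≤ (m:ℝ) := by exact_mod_cast hm1
        linarith
    have h0 : (0:ℝ) ≤ dist (p a) (q a) := dist_nonneg
    nlinarith
  calc Real.sqrt (∑ i, dist (p i) (q i) ^ 2) ≤ Real.sqrt (∑ _i : Fin d, (Δ:ℝ)^2) := by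
        apply Real.sqrt_le_sqrt
        exact Finset.sum_le_sum fun i _ => hbound i
    _ ≤ (d:ℝ) * Δ := by
        rw [Finset.sum_const, Finset.card_univ, Fintype.card_fin, nsmul_eq_mul]
        have h1 : (d:ℝ) * (Δ:ℝ)^2 ≤ ((d:ℝ)*Δ)^2 := by
          have hd1 : (1:ℝ) ≤ (d:ℝ) := by exact_mod_cast hd
          nlinarith [sq_nonneg ((Δ:ℝ))]
        calc Real.sqrt ((d:ℝ) * (Δ:ℝ)^2) ≤ Real.sqrt (((d:ℝ)*Δ)^2) := Real.sqrt_le_sqrt h1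
          _ = (d:ℝ)*Δ := Real.sqrt_sq hdΔ


noncomputable def nrst (C : Finset Pt) (p : Pt) : Pt :=
  if h : C.Nonempty then Classical.choose (exists_distToSet (x := p) h) else p

lemma nrst_mem {C : Finset Pt} (hC : C.Nonempty) (p : Pt) : nrst C p ∈ C := by
  rw [nrst, dif_pos hC]
  exact (Classical.choose_spec (exists_distToSet (x := p) hC)).1

lemma nrst_dist {C : Finset Pt} (hC : C.Nonempty) (p : Pt) :
    distToSet p C = dist p (nrst C p) := by
  rw [nrst, dif_pos hC]
  exact (Classical.choose_spec (exists_distToSet (x := p) hC)).2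

lemma cost1_le_costS (z : ℝ) (x : ℕ → Pt) {t i : ℕ} (hi : i ∈ Finset.Icc 1 t)
    (C : Finset Pt) : cost1 z (x i) C ≤ costS z x t C :=
  Finset.single_le_sum (fun j _ => cost1_nonneg z (x j) C) hi

lemma distToSet_lt_half {z : ℝ} (hz : 1 ≤ z) {p : Pt} {C : Finset Pt}
    (h : cost1 z p C < 2^(-z)) : distToSet p C < 1/2 := by
  by_contra hcon
  push_neg at hcon
  have h1 : ((1:ℝ)/2) ^ z ≤ distToSet p C ^ z :=
    Real.rpow_le_rpow (by norm_num) hcon (by linarith)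
  have h2 : ((1:ℝ)/2) ^ z = (2:ℝ)^(-z) := by
    rw [one_div, Real.inv_rpow (by norm_num), ← Real.rpow_neg (by norm_num)]
  rw [h2] at h1
  exact absurd (lt_of_le_of_lt h1 h) (lt_irrefl _)

lemma card_image_le {n Δ : ℕ} {z : ℝ} (hz : 1 ≤ z) {x : ℕ → Pt}
    (hx : ∀ t ∈ Finset.Icc 1 n, ∀ a : Fin d, ∃ m : ℕ, 1 ≤ m ∧ m ≤ Δ ∧ x t a = m)
    {t : ℕ} (ht : t ≤ n) {C : Finset Pt} (hC : C.Nonempty)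
    (hcost : costS z x t C < 2^(-z)) :
    ((Finset.Icc 1 t).image x).card ≤ C.card := by
  apply Finset.card_le_card_of_injOn (nrst C)
  · intro p _
    exact nrst_mem hC p
  · intro p hp q hq hpq
    by_contra hne
    obtain ⟨i, hi, rfl⟩ := Finset.mem_image.mp hp
    obtain ⟨j, hj, rfl⟩ := Finset.mem_image.mp hq
    have hiN : i ∈ Finset.Icc 1 n := by
      simp only [Finset.mem_Icc] at hi ⊢; omega
    have hjN : j ∈ Finset.Icc 1 n := by
      simp only [Finset.mem_Icc] at hj ⊢; omega
    have hsep : 1 ≤ dist (x i) (x j) := grid_sep (hx i hiN) (hx j hjN) hne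
    have hdi : dist (x i) (nrst C (x i)) < 1/2 := by
      rw [← nrst_dist hC]
      exact distToSet_lt_half hz (lt_of_le_of_lt (cost1_le_costS z x hi C) hcost)
    have hdj : dist (x j) (nrst C (x j)) < 1/2 := by
      rw [← nrst_dist hC]
      exact distToSet_lt_half hz (lt_of_le_of_lt (cost1_le_costS z x hj C) hcost)
    have : dist (x i) (x j) ≤ dist (x i) (nrst C (x i)) + dist (nrst C (x j)) (x j) := by
      rw [hpq]
      exact dist_triangle _ _ _
    rw [dist_comm (nrst C (x j)) (x j)] at this
    linarith

lemma costS_image_zero {z : ℝ} (hz : 1 ≤ z) (x : ℕ → Pt) {t : ℕ} (ht : 1 ≤ t) :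
    costS z x t ((Finset.Icc 1 t).image x) = 0 := by
  apply Finset.sum_eq_zero
  intro i hi
  have hmem : x i ∈ (Finset.Icc 1 t).image x := Finset.mem_image_of_mem x hi
  have h1 : distToSet (x i) ((Finset.Icc 1 t).image x) = 0 := by
    apply le_antisymm
    · calc distToSet (x i) _ ≤ dist (x i) (x i) := distToSet_le (x i) hmem
        _ = 0 := dist_self _
    · exact distToSet_nonneg _ _
  rw [cost1, h1]
  exact Real.zero_rpow (by linarith)

lemma OPT_dichotomy {n Δ k : ℕ} {z : ℝ} (hz : 1 ≤ z) (hk : 1 ≤ k) {x : ℕ → Pt}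
    (hx : ∀ t ∈ Finset.Icc 1 n, ∀ a : Fin d, ∃ m : ℕ, 1 ≤ m ∧ m ≤ Δ ∧ x t a = m)
    {t : ℕ} (ht1 : 1 ≤ t) (ht : t ≤ n) (hlt : OPT k z x t < 2^(-z)) :
    OPT k z x t = 0 ∧ ((Finset.Icc 1 t).image x).card ≤ k := by
  obtain ⟨C, hC, hCk, hcost⟩ := exists_costS_lt hk z x t hlt
  have hcard : ((Finset.Icc 1 t).image x).card ≤ k :=
    le_trans (card_image_le hz hx ht hC hcost) hCk
  refine ⟨le_antisymm ?_ (OPT_nonneg hk z x t), hcard⟩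
  have hne : ((Finset.Icc 1 t).image x).Nonempty := by
    apply Finset.Nonempty.image
    rw [Finset.nonempty_Icc]; exact ht1
  calc OPT k z x t ≤ costS z x t ((Finset.Icc 1 t).image x) :=
        OPT_le_costS k z x t hne hcard
    _ = 0 := costS_image_zero hz x ht1


lemma OPT_le_max {n Δ k : ℕ} {z : ℝ} (hz : 1 ≤ z) (hk : 1 ≤ k) (hd : 1 ≤ d) (hn : 1 ≤ n) {x : ℕ → Pt}
    (hx : ∀ t ∈ Finset.Icc 1 n, ∀ a : Fin d, ∃ m : ℕ, 1 ≤ m ∧ m ≤ Δ ∧ x t a = m)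
    {t : ℕ} (ht : t ≤ n) :
    OPT k z x t ≤ (n:ℝ) * ((d:ℝ) * Δ) ^ z := by
  have h1 : (1:ℕ) ∈ Finset.Icc 1 n := by simp [hn]
  calc OPT k z x t ≤ costS z x t {x 1} :=
        OPT_le_costS k z x t (Finset.singleton_nonempty _) (by simpa using hk)
    _ ≤ ∑ _i ∈ Finset.Icc 1 t, ((d:ℝ) * Δ) ^ z := by
        apply Finset.sum_le_sum
        intro i hi
        have hiN : i ∈ Finset.Icc 1 n := by
          simp only [Finset.mem_Icc] at hi ⊢; omega
        have hdist : dist (x i) (x 1) ≤ (d:ℝ)*Δ := grid_diam hd (hx i hiN) (hx 1 h1)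
        have h0 : distToSet (x i) {x 1} ≤ (d:ℝ)*Δ :=
          le_trans (distToSet_le (x i) (Finset.mem_singleton_self _)) hdist
        exact Real.rpow_le_rpow (distToSet_nonneg _ _) h0 (by linarith)
    _ ≤ (n:ℝ) * ((d:ℝ) * Δ) ^ z := by
        rw [Finset.sum_const, nsmul_eq_mul, Nat.card_Icc]
        apply mul_le_mul_of_nonneg_right _ (Real.rpow_nonneg (by positivity) z)
        simp only [Nat.add_sub_cancel]
        exact_mod_cast ht

lemma onlineSens_le {k : ℕ} {z B : ℝ} {x : ℕ → Pt} {t : ℕ} (hB : 0 ≤ B)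
    (h : ∀ C : Finset Pt, C.Nonempty → C.card ≤ k →
      cost1 z (x t) C / costS z x t C ≤ B) :
    onlineSens k z x t ≤ B := by
  apply Real.sSup_le _ hB
  rintro r ⟨C, h1, h2, rfl⟩
  exact h C h1 h2

lemma sens_le_inv_mult {k : ℕ} {z : ℝ} {x : ℕ → Pt} {t : ℕ} (ht1 : 1 ≤ t) :
    onlineSens k z x t ≤
      1/(((Finset.Icc 1 t).filter (fun i => x i = x t)).card : ℝ) := by
  set P := (Finset.Icc 1 t).filter (fun i => x i = x t) with hP
  have htP : t ∈ P := by
    rw [hP, Finset.mem_filter]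
    exact ⟨by simp [ht1], rfl⟩
  have hm : 1 ≤ P.card := Finset.card_pos.mpr ⟨t, htP⟩
  have hmR : (0:ℝ) < P.card := by exact_mod_cast hm
  apply onlineSens_le (by positivity)
  intro C hC hCk
  set N := cost1 z (x t) C with hN
  set D := costS z x t C with hD
  have hDP : (P.card : ℝ) * N ≤ D := by
    have : ∀ i ∈ P, cost1 z (x i) C = N := by
      intro i hi
      rw [hN, (Finset.mem_filter.mp hi).2]
    calc (P.card : ℝ) * N = ∑ i ∈ P, cost1 z (x i) C := by
          rw [Finset.sum_congr rfl this, Finset.sum_const, nsmul_eq_mul]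
      _ ≤ D := Finset.sum_le_sum_of_subset_of_nonneg (Finset.filter_subset _ _)
          (fun i _ _ => cost1_nonneg z (x i) C)
  rcases eq_or_lt_of_le (cost1_nonneg z (x t) C) with hN0 | hNpos
  · rw [← hN] at hN0
    rw [← hN0, zero_div]
    positivity
  · have hDpos : (0:ℝ) < D := lt_of_lt_of_le (by nlinarith) hDP
    rw [div_le_div_iff₀ hDpos hmR]
    nlinarith


lemma sens_le_band {k : ℕ} {z : ℝ} (hz : 1 ≤ z) (hk : 1 ≤ k) (x : ℕ → Pt)
    {t e : ℕ} (ht1 : 1 ≤ t) (hte : t ≤ e)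
    {Cs : Finset Pt} (hCs : Cs.Nonempty) (hCsk : Cs.card ≤ k)
    {W : ℝ} (hW : 0 < W) (hWt : W ≤ OPT k z x t)
    (hcost : costS z x e Cs ≤ 2 * ((4/3:ℝ)^z * W)) :
    onlineSens k z x t ≤ 3^(z-1) * cost1 z (x t) Cs / W
      + 4^z / (((Finset.Icc 1 t).filter
          (fun i => nrst Cs (x i) = nrst Cs (x t))).card : ℝ) := by
  set P := (Finset.Icc 1 t).filter (fun i => nrst Cs (x i) = nrst Cs (x t)) with hPdef
  have htP : t ∈ P := by
    rw [hPdef, Finset.mem_filter]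
    exact ⟨by simp [ht1], rfl⟩
  have hm : 1 ≤ P.card := Finset.card_pos.mpr ⟨t, htP⟩
  have hmR : (0:ℝ) < (P.card : ℝ) := by exact_mod_cast hm
  set R := (3:ℝ)^(z-1) with hRdef
  set Q := ((4:ℝ)/3)^z with hQdef
  set F := (4:ℝ)^z with hFdef
  have hR : (0:ℝ) < R := Real.rpow_pos_of_pos (by norm_num) _
  have hQ0 : (0:ℝ) < Q := Real.rpow_pos_of_pos (by norm_num) _
  have hQ1 : (1:ℝ) ≤ Q := Real.one_le_rpow (by norm_num) (by linarith)
  have hF : (0:ℝ) < F := Real.rpow_pos_of_pos (by norm_num) _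
  have hRQ : R * (3 * Q) = F := by
    rw [hRdef, hQdef, hFdef]
    rw [show (3:ℝ)^(z-1) = 3^z / 3 by rw [Real.rpow_sub (by norm_num), Real.rpow_one]]
    rw [div_mul_eq_mul_div, mul_comm ((3:ℝ)^z) _, mul_assoc, ← Real.mul_rpow (by norm_num) (by norm_num)]
    norm_num
  set u := cost1 z (x t) Cs with hudef
  have hu : 0 ≤ u := cost1_nonneg z (x t) Cs
  have hB : 0 ≤ R * u / W + F / (P.card : ℝ) := by
    apply add_nonneg
    · exact div_nonneg (mul_nonneg hR.le hu) hW.le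
    · exact div_nonneg hF.le hmR.le
  apply onlineSens_le hB
  intro C hC hCk
  set N := cost1 z (x t) C with hNdef
  set D := costS z x t C with hDdef
  rcases eq_or_lt_of_le (costS_nonneg z x t C) with hD0 | hD
  · rw [← hDdef] at hD0
    rw [← hD0, div_zero]
    exact hB
  · have hWD : W ≤ D := le_trans hWt (OPT_le_costS k z x t hC hCk)
    have hpoint : ∀ i ∈ P, N ≤ R * (u + cost1 z (x i) Cs + cost1 z (x i) C) := by
      intro i hiP
      have hicl : nrst Cs (x i) = nrst Cs (x t) := (Finset.mem_filter.mp hiP).2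
      have htri : distToSet (x t) C ≤
          distToSet (x t) Cs + distToSet (x i) Cs + distToSet (x i) C := by
        have h1 : distToSet (x t) C ≤ dist (x t) (nrst C (x i)) :=
          distToSet_le (x t) (nrst_mem hC (x i))
        have h2 : dist (x t) (nrst C (x i)) ≤
            dist (x t) (nrst Cs (x t)) + dist (nrst Cs (x t)) (x i)
              + dist (x i) (nrst C (x i)) := dist_triangle4 _ _ _ _
        have h3 : dist (nrst Cs (x t)) (x i) = distToSet (x i) Cs := by
          rw [dist_comm, ← hicl, nrst_dist hCs]
        rw [nrst_dist hCs (x t), nrst_dist hC (x i), ← h3] at *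
        linarith
      have h4 : N ≤ (distToSet (x t) Cs + distToSet (x i) Cs + distToSet (x i) C) ^ z :=
        Real.rpow_le_rpow (distToSet_nonneg _ _) htri (by linarith)
      calc N ≤ _ := h4
        _ ≤ R * (distToSet (x t) Cs ^ z + distToSet (x i) Cs ^ z + distToSet (x i) C ^ z) :=
          rpow3 hz (distToSet_nonneg _ _) (distToSet_nonneg _ _) (distToSet_nonneg _ _)
        _ = R * (u + cost1 z (x i) Cs + cost1 z (x i) C) := rfl
    have hSv : ∑ i ∈ P, cost1 z (x i) Cs ≤ 2 * (Q * W) := by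
      refine le_trans ?_ hcost
      apply Finset.sum_le_sum_of_subset_of_nonneg
      · intro i hi
        have := Finset.mem_filter.mp hi |>.1
        simp only [Finset.mem_Icc] at this ⊢
        omega
      · intro i _ _; exact cost1_nonneg z (x i) Cs
    have hSw : ∑ i ∈ P, cost1 z (x i) C ≤ D := by
      apply Finset.sum_le_sum_of_subset_of_nonneg (Finset.filter_subset _ _)
      intro i _ _; exact cost1_nonneg z (x i) C
    have hmaster : (P.card : ℝ) * N ≤ R * ((P.card : ℝ) * u + 2 * (Q * W) + D) := by
      calc (P.card : ℝ) * N = ∑ _i ∈ P, N := by rw [Finset.sum_const, nsmul_eq_mul]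
        _ ≤ ∑ i ∈ P, R * (u + cost1 z (x i) Cs + cost1 z (x i) C) :=
            Finset.sum_le_sum hpoint
        _ = R * ((P.card : ℝ) * u + (∑ i ∈ P, cost1 z (x i) Cs)
              + (∑ i ∈ P, cost1 z (x i) C)) := by
            rw [← Finset.mul_sum, Finset.sum_add_distrib, Finset.sum_add_distrib,
              Finset.sum_const, nsmul_eq_mul]
        _ ≤ R * ((P.card : ℝ) * u + 2 * (Q * W) + D) := by
            apply mul_le_mul_of_nonneg_left _ hR.le
            linarith
    have hfrac : 1 ≤ D / W := (one_le_div hW).mpr hWD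
    have t1 : R * u ≤ R * u * (D / W) :=
      le_mul_of_one_le_right (mul_nonneg hR.le hu) hfrac
    have t2 : R * (2 * (Q * W) + D) ≤ F * D := by
      calc R * (2 * (Q * W) + D) ≤ R * (2 * (Q * D) + D) := by
            apply mul_le_mul_of_nonneg_left _ hR.le
            nlinarith
        _ = (R * (2 * Q + 1)) * D := by ring
        _ ≤ (R * (3 * Q)) * D := by
            apply mul_le_mul_of_nonneg_right _ hD.le
            apply mul_le_mul_of_nonneg_left _ hR.le
            linarith
        _ = F * D := by rw [hRQ]
    have goal' : (P.card : ℝ) * N ≤ (P.card : ℝ) * ((R * u / W + F / (P.card : ℝ)) * D) := by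
      have e1 : (P.card : ℝ) * ((R * u / W + F / (P.card : ℝ)) * D)
          = (P.card : ℝ) * (R * u * (D / W)) + F * D := by
        field_simp
      rw [e1]
      calc (P.card : ℝ) * N ≤ R * ((P.card : ℝ) * u + 2 * (Q * W) + D) := hmaster
        _ = (P.card : ℝ) * (R * u) + R * (2 * (Q * W) + D) := by ring
        _ ≤ (P.card : ℝ) * (R * u * (D / W)) + F * D := by
            apply add_le_add _ t2
            exact mul_le_mul_of_nonneg_left t1 hmR.le
    have hfinal : N ≤ (R * u / W + F / (P.card : ℝ)) * D :=
      le_of_mul_le_mul_left goal' hmR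
    rw [div_le_iff₀ hD]
    exact hfinal


lemma band_sum {n k : ℕ} {z : ℝ} (hz : 1 ≤ z) (hk : 1 ≤ k) (hn : 1 ≤ n) (x : ℕ → Pt)
    {T : Finset ℕ} (hT : T ⊆ Finset.Icc 1 n) (hTne : T.Nonempty)
    {W : ℝ} (hW : 0 < W)
    (hlow : ∀ t ∈ T, W ≤ OPT k z x t)
    (hupp : OPT k z x (T.max' hTne) < (4/3:ℝ)^z * W) :
    ∑ t ∈ T, onlineSens k z x t ≤ 4^z * (1 + (k:ℝ) * (1 + Real.log n)) := by
  set e := T.max' hTne with hedef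
  set Q := ((4:ℝ)/3)^z with hQdef
  have hQ0 : (0:ℝ) < Q := Real.rpow_pos_of_pos (by norm_num) _
  have hQ1 : (1:ℝ) ≤ Q := Real.one_le_rpow (by norm_num) (by linarith)
  have hQW : (0:ℝ) < Q * W := by positivity
  obtain ⟨Cs, hCs, hCsk, hcost⟩ := exists_costS_lt hk z x e
    (r := 2 * (Q * W)) (by nlinarith [hupp])
  have hcost' : costS z x e Cs ≤ 2 * (Q * W) := le_of_lt hcost
  have hbound : ∀ t ∈ T, onlineSens k z x t ≤
      3^(z-1) * cost1 z (x t) Cs / W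
        + 4^z / (((Finset.Icc 1 t).filter
            (fun i => nrst Cs (x i) = nrst Cs (x t))).card : ℝ) := by
    intro t htT
    have ht1 : 1 ≤ t := (Finset.mem_Icc.mp (hT htT)).1
    exact sens_le_band hz hk x ht1 (T.le_max' t htT) hCs hCsk hW (hlow t htT) hcost'
  have hR : (0:ℝ) < (3:ℝ)^(z-1) := Real.rpow_pos_of_pos (by norm_num) _
  have hF : (0:ℝ) < (4:ℝ)^z := Real.rpow_pos_of_pos (by norm_num) _
  have hRQ : (3:ℝ)^(z-1) * (3 * Q) = 4^z := by
    rw [hQdef]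
    rw [show (3:ℝ)^(z-1) = 3^z / 3 by rw [Real.rpow_sub (by norm_num), Real.rpow_one]]
    rw [div_mul_eq_mul_div, mul_comm ((3:ℝ)^z) _, mul_assoc,
      ← Real.mul_rpow (by norm_num) (by norm_num)]
    norm_num
  calc ∑ t ∈ T, onlineSens k z x t
      ≤ ∑ t ∈ T, (3^(z-1) * cost1 z (x t) Cs / W
          + 4^z / (((Finset.Icc 1 t).filter
              (fun i => nrst Cs (x i) = nrst Cs (x t))).card : ℝ)) :=
        Finset.sum_le_sum hbound
    _ = (∑ t ∈ T, 3^(z-1) * cost1 z (x t) Cs / W)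
        + ∑ t ∈ T, 4^z / (((Finset.Icc 1 t).filter
            (fun i => nrst Cs (x i) = nrst Cs (x t))).card : ℝ) :=
        Finset.sum_add_distrib
    _ ≤ (2/3) * 4^z + 4^z * ((k:ℝ) * (1 + Real.log n)) := by
        apply add_le_add
        · have hsumu : ∑ t ∈ T, cost1 z (x t) Cs ≤ 2 * (Q * W) := by
            refine le_trans ?_ hcost'
            apply Finset.sum_le_sum_of_subset_of_nonneg
            · intro t htT
              simp only [Finset.mem_Icc]
              exact ⟨(Finset.mem_Icc.mp (hT htT)).1, T.le_max' t htT⟩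
            · intro i _ _; exact cost1_nonneg z (x i) Cs
          calc ∑ t ∈ T, 3^(z-1) * cost1 z (x t) Cs / W
              = 3^(z-1) / W * ∑ t ∈ T, cost1 z (x t) Cs := by
                rw [Finset.mul_sum]
                apply Finset.sum_congr rfl
                intro t _; ring
            _ ≤ 3^(z-1) / W * (2 * (Q * W)) := by
                apply mul_le_mul_of_nonneg_left hsumu (by positivity)
            _ = (3^(z-1) * (3 * Q)) * (2/(3:ℝ)) := by field_simp
            _ = (2/3) * 4^z := by rw [hRQ]; ring
        · have hsum2 : ∑ t ∈ T, (1:ℝ) / (((Finset.Icc 1 t).filter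
              (fun i => nrst Cs (x i) = nrst Cs (x t))).card : ℝ)
              ≤ ((T.image (fun i => nrst Cs (x i))).card : ℝ) * (1 + Real.log n) := by
            apply sum_le_classes T (fun i => nrst Cs (x i)) _ hn
            · calc T.card ≤ (Finset.Icc 1 n).card := Finset.card_le_card hT
                _ = n := by rw [Nat.card_Icc]; omega
            · intro t htT
              have ht1 : 1 ≤ t := (Finset.mem_Icc.mp (hT htT)).1
              have hsub : T.filter (fun i => nrst Cs (x i) = nrst Cs (x t) ∧ i ≤ t)
                  ⊆ (Finset.Icc 1 t).filter (fun i => nrst Cs (x i) = nrst Cs (x t)) := by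
                intro i hi
                obtain ⟨hiT, hg, hile⟩ := Finset.mem_filter.mp hi
                rw [Finset.mem_filter, Finset.mem_Icc]
                exact ⟨⟨(Finset.mem_Icc.mp (hT hiT)).1, hile⟩, hg⟩
              have hrankpos : 0 < (T.filter (fun i => nrst Cs (x i) = nrst Cs (x t) ∧ i ≤ t)).card := by
                apply Finset.card_pos.mpr
                exact ⟨t, Finset.mem_filter.mpr ⟨htT, rfl, le_rfl⟩⟩
              apply one_div_le_one_div_of_le
              · exact_mod_cast hrankpos
              · exact_mod_cast Finset.card_le_card hsub
          have himg : ((T.image (fun i => nrst Cs (x i))).card : ℝ) ≤ (k:ℝ) := by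
            have : T.image (fun i => nrst Cs (x i)) ⊆ Cs := by
              intro c hc
              obtain ⟨i, _, rfl⟩ := Finset.mem_image.mp hc
              exact nrst_mem hCs (x i)
            exact_mod_cast le_trans (Finset.card_le_card this) hCsk
          have hlog : (0:ℝ) ≤ 1 + Real.log n := by
            have : (0:ℝ) ≤ Real.log n := Real.log_nonneg (by exact_mod_cast hn)
            linarith
          calc ∑ t ∈ T, 4^z / (((Finset.Icc 1 t).filter
              (fun i => nrst Cs (x i) = nrst Cs (x t))).card : ℝ)
              = 4^z * ∑ t ∈ T, (1:ℝ) / (((Finset.Icc 1 t).filter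
                  (fun i => nrst Cs (x i) = nrst Cs (x t))).card : ℝ) := by
                rw [Finset.mul_sum]
                apply Finset.sum_congr rfl
                intro t _; rw [mul_one_div]
            _ ≤ 4^z * (((T.image (fun i => nrst Cs (x i))).card : ℝ) * (1 + Real.log n)) :=
                mul_le_mul_of_nonneg_left hsum2 hF.le
            _ ≤ 4^z * ((k:ℝ) * (1 + Real.log n)) := by
                apply mul_le_mul_of_nonneg_left _ hF.le
                exact mul_le_mul_of_nonneg_right himg hlog
    _ ≤ 4^z * (1 + (k:ℝ) * (1 + Real.log n)) := by nlinarith [hF]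


lemma T0_sum {n Δ k : ℕ} {z : ℝ} (hz : 1 ≤ z) (hk : 1 ≤ k) (hn : 1 ≤ n) {x : ℕ → Pt}
    (hx : ∀ t ∈ Finset.Icc 1 n, ∀ a : Fin d, ∃ m : ℕ, 1 ≤ m ∧ m ≤ Δ ∧ x t a = m) :
    ∑ t ∈ (Finset.Icc 1 n).filter (fun t => OPT k z x t < 2^(-z)), onlineSens k z x t
      ≤ (k:ℝ) * (1 + Real.log n) := by
  set T0 := (Finset.Icc 1 n).filter (fun t => OPT k z x t < 2^(-z)) with hT0
  rcases T0.eq_empty_or_nonempty with hemp | hne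
  · rw [hemp]
    simp only [Finset.sum_empty]
    have : (0:ℝ) ≤ Real.log n := Real.log_nonneg (by exact_mod_cast hn)
    positivity
  · set τ := T0.max' hne with hτ
    have hτT : τ ∈ T0 := T0.max'_mem hne
    have hτIcc := Finset.mem_filter.mp hτT |>.1
    have hτ1 : 1 ≤ τ := (Finset.mem_Icc.mp hτIcc).1
    have hτn : τ ≤ n := (Finset.mem_Icc.mp hτIcc).2
    have hdich := OPT_dichotomy (n := n) (Δ := Δ) hz hk hx hτ1 hτn
      (Finset.mem_filter.mp hτT).2
    -- per point bound
    have hstep : ∑ t ∈ T0, onlineSens k z x t ≤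
        ((T0.image x).card : ℝ) * (1 + Real.log n) := by
      apply sum_le_classes T0 x _ hn
      · calc T0.card ≤ (Finset.Icc 1 n).card :=
            Finset.card_le_card (Finset.filter_subset _ _)
          _ = n := by rw [Nat.card_Icc]; omega
      · intro t htT
        have ht1 : 1 ≤ t := (Finset.mem_Icc.mp (Finset.mem_filter.mp htT).1).1
        have hsub : T0.filter (fun i => x i = x t ∧ i ≤ t)
            ⊆ (Finset.Icc 1 t).filter (fun i => x i = x t) := by
          intro i hi
          obtain ⟨hiT, hg, hile⟩ := Finset.mem_filter.mp hi
          rw [Finset.mem_filter, Finset.mem_Icc]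
          exact ⟨⟨(Finset.mem_Icc.mp (Finset.mem_filter.mp hiT).1).1, hile⟩, hg⟩
        have hrankpos : 0 < (T0.filter (fun i => x i = x t ∧ i ≤ t)).card :=
          Finset.card_pos.mpr ⟨t, Finset.mem_filter.mpr ⟨htT, rfl, le_rfl⟩⟩
        calc onlineSens k z x t
            ≤ 1/(((Finset.Icc 1 t).filter (fun i => x i = x t)).card : ℝ) :=
              sens_le_inv_mult ht1
          _ ≤ 1/((T0.filter (fun i => x i = x t ∧ i ≤ t)).card : ℝ) := by
              apply one_div_le_one_div_of_le
              · exact_mod_cast hrankpos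
              · exact_mod_cast Finset.card_le_card hsub
    have himg : (T0.image x).card ≤ k := by
      refine le_trans (Finset.card_le_card ?_) hdich.2
      intro p hp
      obtain ⟨i, hiT, rfl⟩ := Finset.mem_image.mp hp
      apply Finset.mem_image_of_mem
      rw [Finset.mem_Icc]
      exact ⟨(Finset.mem_Icc.mp (Finset.mem_filter.mp hiT).1).1, T0.le_max' i hiT⟩
    have hlog : (0:ℝ) ≤ 1 + Real.log n := by
      have : (0:ℝ) ≤ Real.log n := Real.log_nonneg (by exact_mod_cast hn)
      linarith
    calc ∑ t ∈ T0, onlineSens k z x t ≤ ((T0.image x).card : ℝ) * (1 + Real.log n) := hstep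
      _ ≤ (k:ℝ) * (1 + Real.log n) := by
          apply mul_le_mul_of_nonneg_right _ hlog
          exact_mod_cast himg

end OSB

open OSB in
set_option maxHeartbeats 1000000 in
/-- Upper bound on the sum of online sensitivities: for points `x_1,…,x_n ∈ [Δ]^d`,
`∑_t σ_t = O(2^{2z} k log²(n d Δ))`, with an absolute constant. -/
theorem total_online_sensitivity_bound :
    ∃ A : ℝ, 0 < A ∧ ∀ (n d k Δ : ℕ) (z : ℝ), 1 ≤ z → 2 ≤ n → 1 ≤ d → 1 ≤ k → 2 ≤ Δ →
      ∀ x : ℕ → EuclideanSpace ℝ (Fin d),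
        (∀ t ∈ Finset.Icc 1 n, ∀ a : Fin d, ∃ m : ℕ, 1 ≤ m ∧ m ≤ Δ ∧ x t a = m) →
        ∑ t ∈ Finset.Icc 1 n, onlineSens k z x t ≤
          A * 2 ^ (2 * z) * k * (Real.log (n * d * Δ)) ^ 2 := by
  classical
  refine ⟨100, by norm_num, ?_⟩
  intro n d k Δ z hz hn hd hk hΔ x hx
  have hn1 : 1 ≤ n := by omega
  set Λ := Real.log ((n:ℝ) * d * Δ) with hΛdef
  set Q := ((4:ℝ)/3)^z with hQdef
  have hQ0 : (0:ℝ) < Q := Real.rpow_pos_of_pos (by norm_num) _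
  have hQ1 : (1:ℝ) ≤ Q := Real.one_le_rpow (by norm_num) (by linarith)
  set W : ℕ → ℝ := fun ℓ => 2^(-z) * Q^ℓ with hWdef
  have hWpos : ∀ ℓ, 0 < W ℓ := by
    intro ℓ
    have : (0:ℝ) < 2^(-z) := Real.rpow_pos_of_pos (by norm_num) _
    positivity
  have hWmono : ∀ {a b : ℕ}, a ≤ b → W a ≤ W b := by
    intro a b hab
    simp only [hWdef]
    apply mul_le_mul_of_nonneg_left (pow_le_pow_right₀ hQ1 hab)
      (le_of_lt (Real.rpow_pos_of_pos (by norm_num) _))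
  have hWsucc : ∀ ℓ, W (ℓ+1) = Q * W ℓ := by
    intro ℓ
    simp only [hWdef, pow_succ]
    ring
  have hlogn0 : (0:ℝ) ≤ Real.log n := Real.log_nonneg (by exact_mod_cast hn1)
  have h2dΔpos : (0:ℝ) < 2*(d:ℝ)*Δ := by
    have : (1:ℝ) ≤ (d:ℝ) := by exact_mod_cast hd
    have : (1:ℝ) ≤ (Δ:ℝ) := by exact_mod_cast (by omega : 1 ≤ Δ)
    positivity
  have hlog2dΔ0 : (0:ℝ) ≤ Real.log (2*(d:ℝ)*Δ) := by
    apply Real.log_nonneg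
    have h1 : (1:ℝ) ≤ (d:ℝ) := by exact_mod_cast hd
    have h2 : (1:ℝ) ≤ (Δ:ℝ) := by exact_mod_cast (by omega : 1 ≤ Δ)
    nlinarith
  set y := 4*Real.log n + 4*Real.log (2*(d:ℝ)*Δ) with hydef
  have hy0 : 0 ≤ y := by positivity
  set L := ⌈y⌉₊ + 1 with hLdef
  have hL1 : 1 ≤ L := by omega
  have h43 : (1:ℝ)/4 ≤ Real.log (4/3) := by
    have h1 : Real.log (3/4) ≤ 3/4 - 1 := Real.log_le_sub_one_of_pos (by norm_num)
    have h2 : Real.log (4/3) = - Real.log (3/4) := by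
      rw [← Real.log_inv]
      norm_num
    linarith
  -- cover bound
  have hcover : ∀ t ∈ Finset.Icc 1 n, OPT k z x t < W L := by
    intro t ht
    have htn : t ≤ n := (Finset.mem_Icc.mp ht).2
    have hle : OPT k z x t ≤ (n:ℝ) * ((d:ℝ) * Δ) ^ z :=
      OPT_le_max hz hk hd hn1 hx htn
    refine lt_of_le_of_lt hle ?_
    have hdΔpos : (0:ℝ) < (d:ℝ)*Δ := by
      have h1 : (1:ℝ) ≤ (d:ℝ) := by exact_mod_cast hd
      have h2 : (1:ℝ) ≤ (Δ:ℝ) := by exact_mod_cast (by omega : 1 ≤ Δ)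
      nlinarith
    have hWL : W L = 2^(-z) * Real.exp ((L:ℝ) * (z * Real.log (4/3))) := by
      simp only [hWdef, hQdef]
      congr 1
      rw [Real.rpow_def_of_pos (by norm_num), ← Real.exp_nat_mul]
      ring_nf
    have hlhs : (n:ℝ) * ((d:ℝ) * Δ) ^ z
        = 2^(-z) * Real.exp (Real.log n + z * Real.log (2*(d:ℝ)*Δ)) := by
      rw [Real.exp_add, mul_comm z (Real.log (2*(d:ℝ)*Δ)), ← Real.rpow_def_of_pos h2dΔpos,
        Real.exp_log (by positivity : (0:ℝ) < (n:ℝ))]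
      rw [show (2*(d:ℝ)*Δ) = 2*((d:ℝ)*Δ) by ring]
      rw [Real.mul_rpow (by norm_num) hdΔpos.le]
      have h2 : (2:ℝ)^(-z) * (2:ℝ)^z = 1 := by
        rw [← Real.rpow_add (by norm_num : (0:ℝ) < 2), neg_add_cancel, Real.rpow_zero]
      linear_combination (-((n:ℝ) * (((d:ℝ)*Δ))^z)) * h2
    rw [hWL, hlhs]
    apply mul_lt_mul_of_pos_left _ (Real.rpow_pos_of_pos (by norm_num) _)
    apply Real.exp_lt_exp.mpr
    have hLy : y + 1 ≤ (L:ℝ) := by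
      have := Nat.le_ceil y
      rw [hLdef]
      push_cast
      linarith
    have hz4 : z * (1/4) ≤ z * Real.log (4/3) :=
      mul_le_mul_of_nonneg_left h43 (by linarith)
    have hstep : (y+1) * (z * (1/4)) ≤ (L:ℝ) * (z * Real.log (4/3)) :=
      mul_le_mul hLy hz4 (by positivity) (by positivity)
    have hexp : Real.log n + z * Real.log (2*(d:ℝ)*Δ) < (y+1) * (z * (1/4)) := by
      rw [hydef]
      nlinarith [mul_le_mul_of_nonneg_right hz hlogn0]
    linarith
  -- partition into T0 and bands
  have hW0 : W 0 = 2^(-z) := by simp [hWdef]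
  set T0 := (Finset.Icc 1 n).filter (fun t => OPT k z x t < 2^(-z)) with hT0def
  set Trest := (Finset.Icc 1 n).filter (fun t => ¬ OPT k z x t < 2^(-z)) with hTrdef
  have hsplit : ∑ t ∈ Finset.Icc 1 n, onlineSens k z x t
      = ∑ t ∈ T0, onlineSens k z x t + ∑ t ∈ Trest, onlineSens k z x t :=
    (Finset.sum_filter_add_sum_filter_not _ _ _).symm
  set Tb : ℕ → Finset ℕ := fun ℓ => (Finset.Icc 1 n).filter
      (fun t => W ℓ ≤ OPT k z x t ∧ OPT k z x t < W (ℓ+1)) with hTbdef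
  have hdisj : Set.PairwiseDisjoint ↑(Finset.range L) Tb := by
    intro a _ b _ hab
    apply Finset.disjoint_left.mpr
    intro t hta htb
    obtain ⟨-, ha1, ha2⟩ := Finset.mem_filter.mp hta
    obtain ⟨-, hb1, hb2⟩ := Finset.mem_filter.mp htb
    rcases lt_or_gt_of_ne hab with h | h
    · exact absurd (lt_of_lt_of_le ha2 (hWmono h)) (not_lt.mpr hb1)
    · exact absurd (lt_of_lt_of_le hb2 (hWmono h)) (not_lt.mpr ha1)
  have hrest : Trest = (Finset.range L).biUnion Tb := by
    ext t
    simp only [hTrdef, hTbdef, Finset.mem_filter, Finset.mem_biUnion, Finset.mem_range]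
    constructor
    · rintro ⟨htIcc, hge⟩
      push_neg at hge
      rw [← hW0] at hge
      have hWLt : OPT k z x t < W L := hcover t htIcc
      have hexists : ∃ ℓ, OPT k z x t < W (ℓ+1) := by
        refine ⟨L - 1, ?_⟩
        have : L - 1 + 1 = L := by omega
        rw [this]
        exact hWLt
      set ℓ0 := Nat.find hexists with hℓ0
      have hspec : OPT k z x t < W (ℓ0+1) := Nat.find_spec hexists
      have hℓ0L : ℓ0 < L := by
        have : ℓ0 ≤ L - 1 := Nat.find_le (by
          have : L - 1 + 1 = L := by omega
          rw [this]; exact hWLt)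
        omega
      refine ⟨ℓ0, hℓ0L, htIcc, ?_, hspec⟩
      rcases Nat.eq_zero_or_pos ℓ0 with h0 | hpos
      · rw [h0]; exact hge
      · obtain ⟨m, hm⟩ : ∃ m, ℓ0 = m + 1 := ⟨ℓ0 - 1, by omega⟩
        have hmlt : m < Nat.find hexists := by rw [← hℓ0]; omega
        have hmin := Nat.find_min hexists hmlt
        rw [← hm] at hmin
        exact not_lt.mp hmin
    · rintro ⟨ℓ, _, htIcc, hge, _⟩
      refine ⟨htIcc, not_lt.mpr ?_⟩
      rw [← hW0]
      exact le_trans (hWmono (Nat.zero_le ℓ)) hge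
  have hrests : ∑ t ∈ Trest, onlineSens k z x t
      = ∑ ℓ ∈ Finset.range L, ∑ t ∈ Tb ℓ, onlineSens k z x t := by
    rw [hrest]
    exact Finset.sum_biUnion hdisj
  -- per-band bound
  have hlog1 : (0:ℝ) ≤ 1 + Real.log n := by linarith
  have hband : ∀ ℓ, ∑ t ∈ Tb ℓ, onlineSens k z x t
      ≤ 4^z * (1 + (k:ℝ) * (1 + Real.log n)) := by
    intro ℓ
    have hkR : (0:ℝ) ≤ (k:ℝ) := by positivity
    have hbpos : (0:ℝ) ≤ 4^z * (1 + (k:ℝ) * (1 + Real.log n)) := by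
      apply mul_nonneg (Real.rpow_nonneg (by norm_num) _)
      nlinarith
    rcases (Tb ℓ).eq_empty_or_nonempty with hemp | hne
    · rw [hemp, Finset.sum_empty]
      exact hbpos
    · refine band_sum hz hk hn1 x (Finset.filter_subset _ _) hne (hWpos ℓ) ?_ ?_
      · intro t htT
        exact (Finset.mem_filter.mp htT).2.1
      · have hmax := (Tb ℓ).max'_mem hne
        have h2 := (Finset.mem_filter.mp hmax).2.2
        rw [hWsucc ℓ] at h2
        exact h2
  have hT0sum : ∑ t ∈ T0, onlineSens k z x t ≤ (k:ℝ) * (1 + Real.log n) :=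
    T0_sum (n := n) (Δ := Δ) hz hk hn1 hx
  -- arithmetic
  have hndΔ4 : (4:ℝ) ≤ (n:ℝ) * d * Δ := by
    have h1 : (2:ℝ) ≤ (n:ℝ) := by exact_mod_cast hn
    have h2 : (1:ℝ) ≤ (d:ℝ) := by exact_mod_cast hd
    have h3 : (2:ℝ) ≤ (Δ:ℝ) := by exact_mod_cast hΔ
    nlinarith
  have h1Λ : (1:ℝ) ≤ Λ := by
    have hexp : Real.exp 1 ≤ (n:ℝ) * d * Δ := by
      have := Real.exp_one_lt_d9
      nlinarith
    calc (1:ℝ) = Real.log (Real.exp 1) := (Real.log_exp 1).symm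
      _ ≤ Λ := Real.log_le_log (Real.exp_pos 1) hexp
  have hlognΛ : Real.log n ≤ Λ := by
    apply Real.log_le_log (by positivity)
    have h2 : (1:ℝ) ≤ (d:ℝ) := by exact_mod_cast hd
    have h3 : (1:ℝ) ≤ (Δ:ℝ) := by exact_mod_cast (by omega : 1 ≤ Δ)
    have hn0 : (0:ℝ) ≤ (n:ℝ) := by positivity
    have s1 : (n:ℝ)*1 ≤ (n:ℝ)*(d:ℝ) := mul_le_mul_of_nonneg_left h2 hn0
    have s2 : (n:ℝ)*(d:ℝ)*1 ≤ (n:ℝ)*(d:ℝ)*(Δ:ℝ) :=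
      mul_le_mul_of_nonneg_left h3 (by positivity)
    nlinarith
  have hlog2dΔΛ : Real.log (2*(d:ℝ)*Δ) ≤ Λ := by
    apply Real.log_le_log h2dΔpos
    have h1 : (2:ℝ) ≤ (n:ℝ) := by exact_mod_cast hn
    have h2 : (1:ℝ) ≤ (d:ℝ) := by exact_mod_cast hd
    have h3 : (1:ℝ) ≤ (Δ:ℝ) := by exact_mod_cast (by omega : 1 ≤ Δ)
    have s1 : 2*((d:ℝ)*(Δ:ℝ)) ≤ (n:ℝ)*((d:ℝ)*(Δ:ℝ)) :=
      mul_le_mul_of_nonneg_right h1 (by positivity)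
    nlinarith
  have hLR : (L:ℝ) ≤ 10 * Λ := by
    have hceil : (⌈y⌉₊ : ℝ) < y + 1 := Nat.ceil_lt_add_one hy0
    have hLc : (L:ℝ) ≤ y + 2 := by
      rw [hLdef]
      push_cast
      linarith
    have hy8 : y ≤ 8 * Λ := by
      rw [hydef]
      linarith
    linarith
  have h4z1 : (1:ℝ) ≤ 4^z := Real.one_le_rpow (by norm_num) (by linarith)
  have h4z0 : (0:ℝ) < 4^z := by linarith
  have h2z4z : (2:ℝ)^(2*z) = 4^z := by
    rw [Real.rpow_mul (by norm_num : (0:ℝ) ≤ 2) 2 z]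
    norm_num
  have hkR1 : (1:ℝ) ≤ (k:ℝ) := by exact_mod_cast hk
  calc ∑ t ∈ Finset.Icc 1 n, onlineSens k z x t
      = ∑ t ∈ T0, onlineSens k z x t + ∑ t ∈ Trest, onlineSens k z x t := hsplit
    _ ≤ (k:ℝ) * (1 + Real.log n)
        + ∑ ℓ ∈ Finset.range L, (4^z * (1 + (k:ℝ) * (1 + Real.log n))) := by
        rw [hrests]
        exact add_le_add hT0sum (Finset.sum_le_sum fun ℓ _ => hband ℓ)
    _ = (k:ℝ) * (1 + Real.log n)
        + (L:ℝ) * (4^z * (1 + (k:ℝ) * (1 + Real.log n))) := by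
        rw [Finset.sum_const, Finset.card_range, nsmul_eq_mul]
    _ ≤ 100 * 2^(2*z) * k * Λ^2 := by
        rw [h2z4z]
        have e1 : (k:ℝ) * (1 + Real.log n) ≤ (k:ℝ) * (2*Λ) := by
          apply mul_le_mul_of_nonneg_left _ (by positivity)
          linarith
        have e2 : 1 + (k:ℝ) * (1 + Real.log n) ≤ (k:ℝ) * (3*Λ) := by
          nlinarith
        have e3 : (L:ℝ) * (4^z * (1 + (k:ℝ) * (1 + Real.log n)))
            ≤ (10*Λ) * (4^z * ((k:ℝ) * (3*Λ))) := by
          apply mul_le_mul hLR _ _ (by positivity)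
          · apply mul_le_mul_of_nonneg_left e2 h4z0.le
          · positivity
        have e4 : (k:ℝ) * (2*Λ) ≤ 4^z * ((k:ℝ) * (2*Λ*Λ)) := by
          have p1 : (1:ℝ) ≤ 4^z * Λ := by nlinarith
          have p2 : (0:ℝ) ≤ (k:ℝ) * (2*Λ) := by positivity
          nlinarith [mul_le_mul_of_nonneg_left p1 p2]
        rw [pow_two]
        nlinarith

-- #print axioms total_online_sensitivity_bound
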